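/- Let μ₁, μ₂ be probability measures on 𝒳 with scaled Jordan decomposition μ₊, μ₋ of μ₁−μ₂. A measurable function f : 𝒳 → ℝ satisfies f♯μ₁ = f♯μ₂ if and only if f♯μ₊ = f♯μ₋. -/

import Mathlib

open MeasureTheory

/-- With `μ₊, μ₋` the scaled Jordan decomposition of `μ₁ − μ₂`, a measurable `f : 𝒳 → ℝ`
satisfies `f♯μ₁ = f♯μ₂` if and only if `f♯μ₊ = f♯μ₋`. -/
theorem stmt5 {𝒳 : Type*} [MeasurableSpace 𝒳]
    (μ₁ μ₂ : Measure 𝒳) [IsProbabilityMeasure μ₁] [IsProbabilityMeasure μ₂]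
    (hne : μ₁ ≠ μ₂)
    (νp νm : Measure 𝒳)
    (hνp : νp = (μ₁.toSignedMeasure - μ₂.toSignedMeasure).toJordanDecomposition.posPart)
    (hνm : νm = (μ₁.toSignedMeasure - μ₂.toSignedMeasure).toJordanDecomposition.negPart)
    (f : 𝒳 → ℝ) (hf : Measurable f) :
    μ₁.map f = μ₂.map f ↔
      ((νp Set.univ)⁻¹ • νp).map f = ((νm Set.univ)⁻¹ • νm).map f := by
  have hfinp : IsFiniteMeasure νp := hνp ▸ inferInstance
  have hfinm : IsFiniteMeasure νm := hνm ▸ inferInstance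
  -- key: μ₁ + νm = μ₂ + νp
  have key : μ₁ + νm = μ₂ + νp := by
    ext A hA
    have h0 := congrArg (fun s : SignedMeasure 𝒳 => s A)
      (μ₁.toSignedMeasure - μ₂.toSignedMeasure).toSignedMeasure_toJordanDecomposition
    simp only [JordanDecomposition.toSignedMeasure, VectorMeasure.sub_apply,
      Measure.toSignedMeasure_apply_measurable hA] at h0
    have hr : (μ₁ A).toReal + ((μ₁.toSignedMeasure -
          μ₂.toSignedMeasure).toJordanDecomposition.negPart A).toReal
        = (μ₂ A).toReal + ((μ₁.toSignedMeasure -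
          μ₂.toSignedMeasure).toJordanDecomposition.posPart A).toReal := by
      simp only [Measure.real] at h0
      linarith
    rw [← hνp, ← hνm] at hr
    have h1 : ((μ₁ + νm) A).toReal = ((μ₂ + νp) A).toReal := by
      simp [Measure.add_apply, ENNReal.toReal_add, measure_ne_top, hr]
    have := (ENNReal.toReal_eq_toReal_iff' (measure_ne_top _ _) (measure_ne_top _ _)).mp h1
    simpa [Measure.add_apply] using this
  have hmass : νp Set.univ = νm Set.univ := by
    have h := congrArg (fun μ : Measure 𝒳 => μ Set.univ) key
    simp only [Measure.add_apply] at h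
    have h1 : μ₁ Set.univ = 1 := measure_univ
    have h2 : μ₂ Set.univ = 1 := measure_univ
    rw [h1, h2] at h
    exact (ENNReal.add_right_inj (by norm_num)).mp h.symm
  have hmne : νp Set.univ ≠ 0 := by
    intro h0
    apply hne
    have hp0 : νp = 0 := Measure.measure_univ_eq_zero.mp h0
    have hm0 : νm = 0 := Measure.measure_univ_eq_zero.mp (hmass ▸ h0)
    have := key
    rw [hp0, hm0, add_zero, add_zero] at this
    exact this
  have hmtop : νp Set.univ ≠ ⊤ := measure_ne_top _ _
  -- pushforward of key
  have keymap : μ₁.map f + νm.map f = μ₂.map f + νp.map f := by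
    rw [← Measure.map_add _ _ hf, ← Measure.map_add _ _ hf, key]
  have hiff : μ₁.map f = μ₂.map f ↔ νp.map f = νm.map f := by
    constructor
    · intro h
      rw [h] at keymap
      ext A hA
      have := congrArg (fun μ : Measure ℝ => μ A) keymap
      simp only [Measure.add_apply] at this
      have hlt : μ₂.map f A ≠ ⊤ := by
        rw [Measure.map_apply hf hA]
        exact (measure_lt_top μ₂ _).ne
      exact ((ENNReal.add_right_inj hlt).mp this).symm
    · intro h
      rw [h] at keymap
      ext A hA
      have := congrArg (fun μ : Measure ℝ => μ A) keymap
      simp only [Measure.add_apply] at this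
      refine (ENNReal.add_left_inj ?_).mp this
      rw [Measure.map_apply hf hA]
      exact (measure_lt_top νm _).ne
  rw [hiff, hmass, Measure.map_smul, Measure.map_smul]
  constructor
  · intro h; rw [h]
  · intro h
    have hc : (νm Set.univ)⁻¹ ≠ 0 := ENNReal.inv_ne_zero.mpr (hmass ▸ hmtop)
    have hct : (νm Set.univ)⁻¹ ≠ ⊤ := ENNReal.inv_ne_top.mpr (hmass ▸ hmne)
    ext A hA
    have := congrArg (fun μ : Measure ℝ => μ A) h
    simp only [Measure.smul_apply, smul_eq_mul] at this
    exact (ENNReal.mul_right_inj hc hct).mp this
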